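/- Let C₁, C₂ ∈ ℝ with 2C₁ + C₂ > 0, let f(φ) = 2(φ − C₁)²(φ + C₂/2), and let C₃ ∈ (0, (2C₁ + C₂)³/27). Then the equation f(φ) = C₃ has exactly three real roots φ₁ < φ₂ < φ₃, and they satisfy the ordering −C₂/2 < φ₁ < (C₁ − C₂)/3 < φ₂ < C₁ < φ₃. -/
import Mathlib

/-- A monic cubic with three distinct roots has no other roots. -/
lemma cubic_aux (a b c r1 r2 r3 x : ℝ) (h12 : r1 ≠ r2) (h13 : r1 ≠ r3) (h23 : r2 ≠ r3)
    (h1 : r1^3 + a*r1^2 + b*r1 + c = 0) (h2 : r2^3 + a*r2^2 + b*r2 + c = 0)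
    (h3 : r3^3 + a*r3^2 + b*r3 + c = 0)
    (hx : x^3 + a*x^2 + b*x + c = 0) : x = r1 ∨ x = r2 ∨ x = r3 := by
  have n12 := sub_ne_zero.mpr h12
  have n13 := sub_ne_zero.mpr h13
  have n23 := sub_ne_zero.mpr h23
  have e12 : r1^2 + r1*r2 + r2^2 + a*(r1+r2) + b = 0 := by
    have key : (r1 - r2) * (r1^2 + r1*r2 + r2^2 + a*(r1+r2) + b) = 0 := by
      linear_combination h1 - h2
    rcases mul_eq_zero.mp key with h | h
    · exact absurd h n12
    · exact h
  have e13 : r1^2 + r1*r3 + r3^2 + a*(r1+r3) + b = 0 := by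
    have key : (r1 - r3) * (r1^2 + r1*r3 + r3^2 + a*(r1+r3) + b) = 0 := by
      linear_combination h1 - h3
    rcases mul_eq_zero.mp key with h | h
    · exact absurd h n13
    · exact h
  have ha : a = -(r1 + r2 + r3) := by
    have key : (r2 - r3) * (r1 + r2 + r3 + a) = 0 := by
      linear_combination e12 - e13
    rcases mul_eq_zero.mp key with h | h
    · exact absurd h n23
    · linarith
  have hb : b = r1*r2 + r1*r3 + r2*r3 := by
    linear_combination e12 - (r1 + r2) * ha
  have hc : c = -(r1*r2*r3) := by
    linear_combination h1 - r1^2 * ha - r1 * hb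
  have key : (x - r1) * (x - r2) * (x - r3) = 0 := by
    linear_combination hx - x^2 * ha - x * hb - hc
  rcases mul_eq_zero.mp key with h | h
  · rcases mul_eq_zero.mp h with h | h
    · exact Or.inl (sub_eq_zero.mp h)
    · exact Or.inr (Or.inl (sub_eq_zero.mp h))
  · exact Or.inr (Or.inr (sub_eq_zero.mp h))

/-- For `2C₁ + C₂ > 0` and `0 < C₃ < (2C₁ + C₂)³/27`, the equation
`2(φ − C₁)²(φ + C₂/2) = C₃` has exactly three real roots `φ₁ < φ₂ < φ₃`, satisfying
`−C₂/2 < φ₁ < (C₁ − C₂)/3 < φ₂ < C₁ < φ₃`. -/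
theorem dgh_cubic_three_roots
    (C₁ C₂ C₃ : ℝ) (h : 0 < 2 * C₁ + C₂)
    (f : ℝ → ℝ) (hf : f = fun φ => 2 * (φ - C₁) ^ 2 * (φ + C₂ / 2))
    (hC₃ : C₃ ∈ Set.Ioo 0 ((2 * C₁ + C₂) ^ 3 / 27)) :
    ∃ φ₁ φ₂ φ₃ : ℝ,
      (∀ x : ℝ, f x = C₃ ↔ x = φ₁ ∨ x = φ₂ ∨ x = φ₃) ∧
      -C₂ / 2 < φ₁ ∧ φ₁ < (C₁ - C₂) / 3 ∧ (C₁ - C₂) / 3 < φ₂ ∧ φ₂ < C₁ ∧ C₁ < φ₃ := by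
  obtain ⟨hC₃pos, hC₃lt⟩ := hC₃
  subst hf
  set m : ℝ := (C₁ - C₂) / 3 with hm
  have hcont : Continuous (fun φ : ℝ => 2 * (φ - C₁) ^ 2 * (φ + C₂ / 2)) := by continuity
  have hfm : (fun φ : ℝ => 2 * (φ - C₁) ^ 2 * (φ + C₂ / 2)) m = (2 * C₁ + C₂) ^ 3 / 27 := by
    simp only [hm]; ring
  have hfl : (fun φ : ℝ => 2 * (φ - C₁) ^ 2 * (φ + C₂ / 2)) (-C₂ / 2) = 0 := by
    simp only; ring
  have hfC₁ : (fun φ : ℝ => 2 * (φ - C₁) ^ 2 * (φ + C₂ / 2)) C₁ = 0 := by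
    simp only; ring
  have hlm : -C₂ / 2 < m := by simp only [hm]; linarith
  have hmC₁ : m < C₁ := by simp only [hm]; linarith
  -- φ₁ via IVT on [-C₂/2, m]
  have h1 : C₃ ∈ Set.Ioo ((fun φ : ℝ => 2 * (φ - C₁) ^ 2 * (φ + C₂ / 2)) (-C₂ / 2))
      ((fun φ : ℝ => 2 * (φ - C₁) ^ 2 * (φ + C₂ / 2)) m) := by
    rw [hfl, hfm]; exact ⟨hC₃pos, hC₃lt⟩
  obtain ⟨φ₁, hφ₁mem, hφ₁⟩ := intermediate_value_Ioo hlm.le hcont.continuousOn h1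
  -- φ₂ via IVT on [m, C₁] (decreasing)
  have h2 : C₃ ∈ Set.Ioo ((fun φ : ℝ => 2 * (φ - C₁) ^ 2 * (φ + C₂ / 2)) C₁)
      ((fun φ : ℝ => 2 * (φ - C₁) ^ 2 * (φ + C₂ / 2)) m) := by
    rw [hfC₁, hfm]; exact ⟨hC₃pos, hC₃lt⟩
  obtain ⟨φ₂, hφ₂mem, hφ₂⟩ := intermediate_value_Ioo' hmC₁.le hcont.continuousOn h2
  -- φ₃ via IVT on [C₁, N]
  set N : ℝ := C₁ + 1 + C₃ + |C₁| + |C₂| with hN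
  have habs1 : C₁ ≤ |C₁| := le_abs_self C₁
  have habs1' : -|C₁| ≤ C₁ := neg_abs_le C₁
  have habs2 : -|C₂| ≤ C₂ := neg_abs_le C₂
  have habs2' : (0:ℝ) ≤ |C₂| := abs_nonneg C₂
  have habs1'' : (0:ℝ) ≤ |C₁| := abs_nonneg C₁
  have hC₁N : C₁ < N := by simp only [hN]; linarith
  have hfN : C₃ < (fun φ : ℝ => 2 * (φ - C₁) ^ 2 * (φ + C₂ / 2)) N := by
    simp only [hN]
    nlinarith [sq_nonneg (1 + C₃ + |C₁| + |C₂|), sq_nonneg (C₃ + |C₁| + |C₂|)]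
  have h3 : C₃ ∈ Set.Ioo ((fun φ : ℝ => 2 * (φ - C₁) ^ 2 * (φ + C₂ / 2)) C₁)
      ((fun φ : ℝ => 2 * (φ - C₁) ^ 2 * (φ + C₂ / 2)) N) := by
    rw [hfC₁]; exact ⟨hC₃pos, hfN⟩
  obtain ⟨φ₃, hφ₃mem, hφ₃⟩ := intermediate_value_Ioo hC₁N.le hcont.continuousOn h3
  obtain ⟨hφ₁l, hφ₁u⟩ := hφ₁mem
  obtain ⟨hφ₂l, hφ₂u⟩ := hφ₂mem
  obtain ⟨hφ₃l, hφ₃u⟩ := hφ₃mem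
  refine ⟨φ₁, φ₂, φ₃, ?_, hφ₁l, hφ₁u, hφ₂l, hφ₂u, hφ₃l⟩
  intro x
  constructor
  · intro hx
    have h12 : φ₁ ≠ φ₂ := ne_of_lt (lt_trans hφ₁u hφ₂l)
    have h13 : φ₁ ≠ φ₃ := ne_of_lt (lt_trans hφ₁u (lt_trans hφ₂l (lt_trans hφ₂u hφ₃l)))
    have h23 : φ₂ ≠ φ₃ := ne_of_lt (lt_trans hφ₂u hφ₃l)
    refine cubic_aux (C₂/2 - 2*C₁) (C₁^2 - C₁*C₂) (C₁^2*C₂/2 - C₃/2) φ₁ φ₂ φ₃ x h12 h13 h23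
      ?_ ?_ ?_ ?_
    · linear_combination hφ₁ / 2
    · linear_combination hφ₂ / 2
    · linear_combination hφ₃ / 2
    · linear_combination hx / 2
  · rintro (rfl | rfl | rfl)
    · exact hφ₁
    · exact hφ₂
    · exact hφ₃
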